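/- Let U ⊆ ℂ be open and h : ℂ → ℂ be complex-differentiable on U. Let Ω ⊆ ℝ² be open and let λ : ℝ² → ℂ be differentiable on Ω with Im λ > 0 on Ω, such that for every (x,y) ∈ Ω the point w₀ := y − λ(x,y)·x lies in U and λ(x,y) = h(w₀). Set J(x,y) := 1 + h'(w₀)·x and assume J ≠ 0 on Ω. Then at every point of Ω: (i) λ_y = h'(w₀)/J and λ_x = −λ·h'(w₀)/J, so that λ_x + λ·λ_y = 0 (λ is rigid); (ii) Φ = 2i·(Im λ)/conj(J); in particular Φ ≠ 0 on Ω. -/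

import Mathlib

open Complex

noncomputable def pdx (f : ℝ × ℝ → ℂ) (p : ℝ × ℝ) : ℂ := fderiv ℝ f p (1, 0)
noncomputable def pdy (f : ℝ × ℝ → ℂ) (p : ℝ × ℝ) : ℂ := fderiv ℝ f p (0, 1)

/-- The characteristic Jacobian. -/
noncomputable def Phi (lam : ℝ × ℝ → ℂ) (p : ℝ × ℝ) : ℂ :=
  (lam p - (starRingEnd ℂ) (lam p))
    - (p.1 : ℂ) * ((starRingEnd ℂ) (pdx lam p) + lam p * (starRingEnd ℂ) (pdy lam p))

/-- On the Burgers domain of a holomorphic seed `h`, the structure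
`λ = h(y − λx)` is rigid and `Φ = 2i·Im λ / conj J ≠ 0`. -/
theorem stmt11
    (U : Set ℂ) (hU : IsOpen U) (h : ℂ → ℂ)
    (hh : ∀ w ∈ U, DifferentiableAt ℂ h w)
    (Ω : Set (ℝ × ℝ)) (hΩ : IsOpen Ω)
    (lam : ℝ × ℝ → ℂ)
    (hlam : ∀ p ∈ Ω, DifferentiableAt ℝ lam p)
    (him : ∀ p ∈ Ω, 0 < (lam p).im)
    (hw : ∀ p ∈ Ω, (p.2 : ℂ) - lam p * (p.1 : ℂ) ∈ U)
    (hfix : ∀ p ∈ Ω, lam p = h ((p.2 : ℂ) - lam p * (p.1 : ℂ)))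
    (hJ : ∀ p ∈ Ω, (1 : ℂ) + deriv h ((p.2 : ℂ) - lam p * (p.1 : ℂ)) * (p.1 : ℂ) ≠ 0) :
    ∀ p ∈ Ω,
      pdy lam p = deriv h ((p.2 : ℂ) - lam p * (p.1 : ℂ))
          / (1 + deriv h ((p.2 : ℂ) - lam p * (p.1 : ℂ)) * (p.1 : ℂ)) ∧
      pdx lam p = -lam p * deriv h ((p.2 : ℂ) - lam p * (p.1 : ℂ))
          / (1 + deriv h ((p.2 : ℂ) - lam p * (p.1 : ℂ)) * (p.1 : ℂ)) ∧
      pdx lam p + lam p * pdy lam p = 0 ∧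
      Phi lam p = 2 * I * ((lam p).im : ℂ)
          / (starRingEnd ℂ) (1 + deriv h ((p.2 : ℂ) - lam p * (p.1 : ℂ)) * (p.1 : ℂ)) ∧
      Phi lam p ≠ 0 := by
  intro p hp
  have hd := hlam p hp
  have hzU := hw p hp
  have hJp := hJ p hp
  set z : ℂ := (p.2 : ℂ) - lam p * p.1 with hz
  set d : ℂ := deriv h z with hdd
  have hhz : HasDerivAt h d z := (hh z hzU).hasDerivAt
  have hhF : HasFDerivAt h ((1 : ℂ →L[ℂ] ℂ).smulRight d) z := hhz.hasFDerivAt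
  set L : (ℝ × ℝ) →L[ℝ] ℂ := fderiv ℝ lam p with hLdef
  have hlamF : HasFDerivAt lam L p := hd.hasFDerivAt
  have h1 : HasFDerivAt (fun q : ℝ × ℝ => (q.2 : ℂ))
      (Complex.ofRealCLM.comp (ContinuousLinearMap.snd ℝ ℝ ℝ)) p :=
    (Complex.ofRealCLM.comp (ContinuousLinearMap.snd ℝ ℝ ℝ)).hasFDerivAt
  have h2 : HasFDerivAt (fun q : ℝ × ℝ => (q.1 : ℂ))
      (Complex.ofRealCLM.comp (ContinuousLinearMap.fst ℝ ℝ ℝ)) p :=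
    (Complex.ofRealCLM.comp (ContinuousLinearMap.fst ℝ ℝ ℝ)).hasFDerivAt
  have hmul : HasFDerivAt (fun q : ℝ × ℝ => lam q * (q.1 : ℂ))
      (lam p • (Complex.ofRealCLM.comp (ContinuousLinearMap.fst ℝ ℝ ℝ)) + (p.1 : ℂ) • L) p :=
    hlamF.mul h2
  have hwF : HasFDerivAt (fun q : ℝ × ℝ => (q.2 : ℂ) - lam q * (q.1 : ℂ))
      (Complex.ofRealCLM.comp (ContinuousLinearMap.snd ℝ ℝ ℝ)
        - (lam p • (Complex.ofRealCLM.comp (ContinuousLinearMap.fst ℝ ℝ ℝ)) + (p.1 : ℂ) • L)) p :=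
    h1.sub hmul
  have hcomp : HasFDerivAt (fun q : ℝ × ℝ => h ((q.2 : ℂ) - lam q * (q.1 : ℂ)))
      ((((1 : ℂ →L[ℂ] ℂ).smulRight d).restrictScalars ℝ).comp
        (Complex.ofRealCLM.comp (ContinuousLinearMap.snd ℝ ℝ ℝ)
          - (lam p • (Complex.ofRealCLM.comp (ContinuousLinearMap.fst ℝ ℝ ℝ)) + (p.1 : ℂ) • L))) p :=
    (hhF.restrictScalars ℝ).comp p hwF
  have heq : lam =ᶠ[nhds p] fun q : ℝ × ℝ => h ((q.2 : ℂ) - lam q * (q.1 : ℂ)) :=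
    Filter.eventuallyEq_of_mem (hΩ.mem_nhds hp) fun q hq => hfix q hq
  have hlamF2 := hcomp.congr_of_eventuallyEq heq
  have hE : L = (((1 : ℂ →L[ℂ] ℂ).smulRight d).restrictScalars ℝ).comp
      (Complex.ofRealCLM.comp (ContinuousLinearMap.snd ℝ ℝ ℝ)
        - (lam p • (Complex.ofRealCLM.comp (ContinuousLinearMap.fst ℝ ℝ ℝ)) + (p.1 : ℂ) • L)) := by
    rw [hLdef]; exact hlamF2.fderiv
  have epx : pdx lam p = L (1, 0) := rfl
  have epy : pdy lam p = L (0, 1) := rfl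
  have e1 : L (1, 0) = ((0 : ℂ) - (lam p * 1 + (p.1 : ℂ) * L (1, 0))) * d := by
    conv_lhs => rw [hE]
    simp [ContinuousLinearMap.smulRight_apply, smul_eq_mul]
    ring
  have e2 : L (0, 1) = ((1 : ℂ) - (lam p * 0 + (p.1 : ℂ) * L (0, 1))) * d := by
    conv_lhs => rw [hE]
    simp [ContinuousLinearMap.smulRight_apply, smul_eq_mul]
    ring
  have hx : pdx lam p = -lam p * d / (1 + d * p.1) := by
    rw [eq_div_iff hJp, epx]; linear_combination e1
  have hy : pdy lam p = d / (1 + d * p.1) := by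
    rw [eq_div_iff hJp, epy]; linear_combination e2
  have hK2 : (1 : ℂ) + (starRingEnd ℂ) d * (p.1 : ℂ) ≠ 0 := by
    intro hc
    apply hJp
    have := congrArg (starRingEnd ℂ) hc
    simpa [Complex.conj_ofReal] using this
  have hK : (starRingEnd ℂ) (1 + d * p.1) ≠ 0 := by
    simpa [Complex.conj_ofReal] using hK2
  have hsub : lam p - (starRingEnd ℂ) (lam p) = 2 * I * ((lam p).im : ℂ) := by
    rw [Complex.sub_conj]; push_cast; ring
  have hPhi : Phi lam p = 2 * I * ((lam p).im : ℂ) / (starRingEnd ℂ) (1 + d * p.1) := by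
    rw [Phi, hx, hy]
    simp only [map_div₀, map_add, map_mul, map_one, map_neg, Complex.conj_ofReal]
    have hK3 : (1 : ℂ) + ↑p.1 * (starRingEnd ℂ) d ≠ 0 := by rw [mul_comm]; exact hK2
    field_simp
    linear_combination hsub
  refine ⟨hy, hx, ?_, hPhi, ?_⟩
  · rw [hx, hy]; field_simp; ring
  · rw [hPhi]
    apply div_ne_zero _ hK
    simp [Complex.ext_iff, (him p hp).ne']
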